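/- Let x₁,…,xₙ ∈ ℝ^d be the rows of X ∈ ℝ^{n×d}, y ∈ ℝⁿ, α ∈ (0,∞)^d, and let w₊, w₋ : [0,∞) → ℝ^d be differentiable with w₊(0) = w₋(0) = α, satisfying the gradient flow equations w₊'(t) = −[(1/n)·Xᵀ(Xβ(t) − y)] ⊙ w₊(t) and w₋'(t) = +[(1/n)·Xᵀ(Xβ(t) − y)] ⊙ w₋(t), where β(t) = w₊(t)² − w₋(t)² (coordinate-wise squares). Then for all t ≥ 0, the map t ↦ (1/4)·arsinh(β(t)/(2α²)) (coordinate-wise, i.e. the gradient ∇φ_α(β(t)) of the hyperbolic entropy) is differentiable with derivative −(1/(2n))·Xᵀ(Xβ(t) − y) = −∇L(β(t)), where L(β) = (1/(4n))·‖Xβ − y‖₂². -/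

import Mathlib

theorem stmt_18 {n d : ℕ} (hn : 0 < n) (X : Matrix (Fin n) (Fin d) ℝ) (y : Fin n → ℝ)
    (α : Fin d → ℝ) (hα : ∀ i, 0 < α i)
    (wp wm : ℝ → Fin d → ℝ) (hw0 : wp 0 = α ∧ wm 0 = α)
    (β : ℝ → Fin d → ℝ) (hβ : ∀ t, β t = fun j => wp t j ^ 2 - wm t j ^ 2)
    (hflowp : ∀ t : ℝ, HasDerivAt wp
      (fun j => -(((1 / (n : ℝ)) * X.transpose.mulVec (X.mulVec (β t) - y) j) * wp t j)) t)
    (hflowm : ∀ t : ℝ, HasDerivAt wm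
      (fun j => ((1 / (n : ℝ)) * X.transpose.mulVec (X.mulVec (β t) - y) j) * wm t j) t) :
    ∀ t : ℝ, 0 ≤ t →
      HasDerivAt (fun s => fun j => (1 / 4) * Real.arsinh (β s j / (2 * α j ^ 2)))
        (fun j => -((1 / (2 * (n : ℝ))) * X.transpose.mulVec (X.mulVec (β t) - y) j)) t := by
  intro t ht
  set g : ℝ → Fin d → ℝ :=
    fun s j => (1 / (n : ℝ)) * X.transpose.mulVec (X.mulVec (β s) - y) j with hg
  have hwp : ∀ (j : Fin d) (s : ℝ),
      HasDerivAt (fun u => wp u j) (-(g s j * wp s j)) s := fun j s =>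
    hasDerivAt_pi.mp (hflowp s) j
  have hwm : ∀ (j : Fin d) (s : ℝ),
      HasDerivAt (fun u => wm u j) (g s j * wm s j) s := fun j s =>
    hasDerivAt_pi.mp (hflowm s) j
  -- invariant: wp * wm = α^2
  have hprod : ∀ (j : Fin d) (s : ℝ), wp s j * wm s j = α j ^ 2 := by
    intro j s
    have hd : ∀ u : ℝ, HasDerivAt (fun u => wp u j * wm u j) 0 u := by
      intro u
      have h := (hwp j u).mul (hwm j u)
      exact h.congr_deriv (by ring)
    have hc := is_const_of_deriv_eq_zero (f := fun u => wp u j * wm u j)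
      (fun u => (hd u).differentiableAt) (fun u => (hd u).deriv) s 0
    rw [hc, hw0.1, hw0.2]; ring
  rw [hasDerivAt_pi]
  intro j
  have hA : 0 < α j ^ 2 := pow_pos (hα j) 2
  have hS : 0 < wp t j ^ 2 + wm t j ^ 2 := by
    have hp := hprod j t
    have hwne : wp t j ≠ 0 := by
      intro h; rw [h, zero_mul] at hp; exact hA.ne' hp.symm
    have : 0 < wp t j ^ 2 := pow_pos (abs_pos.mpr hwne) 2 |>.trans_eq (by rw [sq_abs])
    nlinarith [sq_nonneg (wm t j)]
  have hβj : HasDerivAt (fun s => β s j)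
      (-(2 * g t j * (wp t j ^ 2 + wm t j ^ 2))) t := by
    have heq : (fun s => β s j) = fun s => wp s j ^ 2 - wm s j ^ 2 := by
      funext s; rw [hβ s]
    rw [heq]
    have h := (((hwp j t).pow 2)).sub ((hwm j t).pow 2)
    exact h.congr_deriv (by push_cast; ring)
  have hu : HasDerivAt (fun s => β s j / (2 * α j ^ 2))
      (-(2 * g t j * (wp t j ^ 2 + wm t j ^ 2)) / (2 * α j ^ 2)) t :=
    hβj.div_const _
  have harc := ((Real.hasDerivAt_arsinh (β t j / (2 * α j ^ 2))).comp t hu).const_mul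
    (1 / 4 : ℝ)
  have hsqrt : Real.sqrt (1 + (β t j / (2 * α j ^ 2)) ^ 2)
      = (wp t j ^ 2 + wm t j ^ 2) / (2 * α j ^ 2) := by
    rw [show 1 + (β t j / (2 * α j ^ 2)) ^ 2
        = ((wp t j ^ 2 + wm t j ^ 2) / (2 * α j ^ 2)) ^ 2 by
      rw [hβ t]
      have hp := hprod j t
      field_simp
      have h4 : α j ^ 4 = (wp t j * wm t j) ^ 2 := by rw [hp]; ring
      rw [eq_div_iff (pow_pos (hα j) 4).ne', add_mul, div_mul_cancel₀ _ (pow_pos (hα j) 4).ne', h4]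
      ring]
    exact Real.sqrt_sq (by positivity)
  refine harc.congr_deriv ?_
  rw [hsqrt, hg]
  have hn' : (n : ℝ) ≠ 0 := Nat.cast_ne_zero.mpr hn.ne'
  have hαj : α j ≠ 0 := (hα j).ne'
  field_simp
  ring
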